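/- If A : ℕ → ℕ and B : ℕ → ℕ are cobweb-admissible sequences, then their at-the-point (pointwise) product C defined by C(n) = A(n)·B(n) is also cobweb-admissible, and moreover for all 0 ≤ k ≤ n the exact quotient binom(n,k)_C equals the product binom(n,k)_A · binom(n,k)_B. -/

import Mathlib

/-- The `F`-factorial of a sequence `F : ℕ → ℕ`: `F_n! = ∏_{i=1}^{n} F i`. -/
def ffact (F : ℕ → ℕ) (n : ℕ) : ℕ := ∏ i ∈ Finset.Icc 1 n, F i

/-- A sequence `F : ℕ → ℕ` is cobweb-admissible iff `F_k!·F_{n-k}! ∣ F_n!` for all `k ≤ n`. -/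
def CobwebAdmissible (F : ℕ → ℕ) : Prop :=
  ∀ n k : ℕ, k ≤ n → ffact F k * ffact F (n - k) ∣ ffact F n


lemma ffact_mul (A B : ℕ → ℕ) (n : ℕ) :
    ffact (fun n => A n * B n) n = ffact A n * ffact B n := by
  simp [ffact, Finset.prod_mul_distrib]

/-- The pointwise product of two cobweb-admissible sequences is cobweb-admissible, and the
`F`-nomial coefficients multiply: `binom(n,k)_{A·B} = binom(n,k)_A · binom(n,k)_B`. -/
theorem cobwebAdmissible_pointwise_mul (A B : ℕ → ℕ)
    (hA : CobwebAdmissible A) (hB : CobwebAdmissible B) :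
    CobwebAdmissible (fun n => A n * B n) ∧
      ∀ n k : ℕ, k ≤ n →
        ffact (fun n => A n * B n) n /
            (ffact (fun n => A n * B n) k * ffact (fun n => A n * B n) (n - k))
          = (ffact A n / (ffact A k * ffact A (n - k)))
            * (ffact B n / (ffact B k * ffact B (n - k))) := by
  constructor
  · intro n k hk
    rw [ffact_mul, ffact_mul, ffact_mul, mul_mul_mul_comm]
    exact mul_dvd_mul (hA n k hk) (hB n k hk)
  · intro n k hk
    rw [ffact_mul, ffact_mul, ffact_mul, mul_mul_mul_comm]
    exact (Nat.div_mul_div_comm (hA n k hk) (hB n k hk)).symm -- (hA n k hk) (hB n k hk)
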